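/- Let I ⊆ ℤ⁺ be such that both I and ℤ⁺ \ I are infinite. Then there exists a Hilbert holomorphic function space H on the unit disk in which the polynomials are dense, but the set of polynomials p with supp(\hat p) ⊆ I is not dense in {f ∈ H : supp(\hat f) ⊆ I}. -/

import Mathlib

open Metric Filter FormalMultilinearSeries
open scoped ENNReal NNReal Topology Classical

noncomputable section

namespace Stmt17

/-- sum function of a power series given by coefficients -/
def F (c : ℕ → ℂ) : ℂ → ℂ := fun z => ∑' n, c n * z ^ n

lemma summable_aux {C r : ℝ} (hC : 0 ≤ C) (h0 : 0 ≤ r) (h1 : r < 1) :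
    Summable (fun n : ℕ => C * ((n : ℝ) + 1) * r ^ n) := by
  have hr : ‖r‖ < 1 := by rwa [Real.norm_eq_abs, abs_of_nonneg h0]
  have h₁ : Summable (fun n : ℕ => (n : ℝ) ^ 1 * r ^ n) :=
    summable_pow_mul_geometric_of_norm_lt_one 1 hr
  have h₂ : Summable (fun n : ℕ => r ^ n) := summable_geometric_of_norm_lt_one hr
  have h3 := (h₁.add h₂).mul_left C
  refine h3.congr fun n => by push_cast; ring

lemma C_nonneg {c : ℕ → ℂ} {C : ℝ} (hc : ∀ n, ‖c n‖ ≤ C * ((n:ℝ)+1)) : 0 ≤ C := by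
  have h := (norm_nonneg (c 0)).trans (hc 0)
  simpa using h

lemma summable_cz {c : ℕ → ℂ} {C : ℝ} (hc : ∀ n, ‖c n‖ ≤ C * ((n:ℝ)+1)) {z : ℂ}
    (hz : ‖z‖ < 1) : Summable (fun n : ℕ => ‖c n * z ^ n‖) := by
  refine Summable.of_nonneg_of_le (fun n => norm_nonneg _) (fun n => ?_)
    (summable_aux (C_nonneg hc) (norm_nonneg z) hz)
  rw [norm_mul, norm_pow]
  exact mul_le_mul_of_nonneg_right (hc n) (pow_nonneg (norm_nonneg z) n)

lemma hasSum_F {c : ℕ → ℂ} {C : ℝ} (hc : ∀ n, ‖c n‖ ≤ C * ((n:ℝ)+1)) {z : ℂ}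
    (hz : ‖z‖ < 1) : HasSum (fun n => c n * z ^ n) (F c z) :=
  ((summable_cz hc hz).of_norm).hasSum

lemma one_le_radius {c : ℕ → ℂ} {C : ℝ} (hc : ∀ n, ‖c n‖ ≤ C * ((n:ℝ)+1)) :
    1 ≤ (ofScalars ℂ c).radius := by
  refine ENNReal.le_of_forall_nnreal_lt fun r hr => ?_
  have hr1 : (r : ℝ) < 1 := by exact_mod_cast hr
  apply FormalMultilinearSeries.le_radius_of_summable_norm
  have hz : ‖((r : ℝ) : ℂ)‖ < 1 := by
    rw [Complex.norm_real, Real.norm_eq_abs]; rwa [abs_of_nonneg r.coe_nonneg]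
  have h := summable_cz hc hz
  refine h.congr fun n => ?_
  rw [norm_mul, norm_pow, Complex.norm_real, Real.norm_eq_abs, abs_of_nonneg r.coe_nonneg,
    ofScalars_norm]


lemma hasFPS {c : ℕ → ℂ} {C : ℝ} (hc : ∀ n, ‖c n‖ ≤ C * ((n:ℝ)+1)) :
    HasFPowerSeriesOnBall (F c) (ofScalars ℂ c) 0 1 := by
  have hrad := one_le_radius hc
  have h := FormalMultilinearSeries.hasFPowerSeriesOnBall (p := ofScalars ℂ c)
    (lt_of_lt_of_le zero_lt_one hrad)
  have h2 := h.mono zero_lt_one hrad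
  have hsum : (ofScalars ℂ c).sum = F c := by
    funext z
    exact tsum_congr fun n => by rw [ofScalars_apply_eq, smul_eq_mul]
  rwa [hsum] at h2

lemma mem_eball_iff {z : ℂ} : z ∈ Metric.eball (0:ℂ) 1 ↔ ‖z‖ < 1 := by
  rw [EMetric.mem_ball, edist_eq_enorm_sub, sub_zero, enorm_eq_nnnorm, ← ENNReal.coe_one,
    ENNReal.coe_lt_coe, ← NNReal.coe_lt_coe, coe_nnnorm, NNReal.coe_one]

lemma diffOn_F {c : ℕ → ℂ} {C : ℝ} (hc : ∀ n, ‖c n‖ ≤ C * ((n:ℝ)+1)) :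
    DifferentiableOn ℂ (F c) (ball (0:ℂ) 1) := by
  have h := (hasFPS hc).analyticOnNhd.differentiableOn
  refine h.mono fun z hz => ?_
  rw [mem_ball_zero_iff] at hz
  exact mem_eball_iff.mpr hz

lemma norm_F_le {c : ℕ → ℂ} {C : ℝ} (hc : ∀ n, ‖c n‖ ≤ C * ((n:ℝ)+1)) {r : ℝ} {z : ℂ}
    (h1 : r < 1) (hz : ‖z‖ ≤ r) : ‖F c z‖ ≤ ∑' n : ℕ, C * ((n:ℝ)+1) * r ^ n := by
  have h0 : 0 ≤ r := le_trans (norm_nonneg z) hz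
  have hzlt : ‖z‖ < 1 := lt_of_le_of_lt hz h1
  calc ‖F c z‖ ≤ ∑' n : ℕ, ‖c n * z ^ n‖ := norm_tsum_le_tsum_norm (summable_cz hc hzlt)
    _ ≤ ∑' n : ℕ, C * ((n:ℝ)+1) * r ^ n := by
        refine Summable.tsum_le_tsum (fun n => ?_) (summable_cz hc hzlt)
          (summable_aux (C_nonneg hc) h0 h1)
        rw [norm_mul, norm_pow]
        exact mul_le_mul (hc n) (pow_le_pow_left₀ (norm_nonneg z) hz n)
          (pow_nonneg (norm_nonneg z) n)
          (mul_nonneg (C_nonneg hc) (by positivity))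

lemma coeff_unique {c c' : ℕ → ℂ} {C C' : ℝ} (hc : ∀ n, ‖c n‖ ≤ C * ((n:ℝ)+1))
    (hc' : ∀ n, ‖c' n‖ ≤ C' * ((n:ℝ)+1))
    (h : ∀ z : ℂ, ‖z‖ < 1 → F c z = F c' z) : c = c' := by
  have h1 : HasFPowerSeriesAt (F c') (ofScalars ℂ c) 0 := by
    refine ((hasFPS hc).congr fun z hz => ?_).hasFPowerSeriesAt
    exact h z (mem_eball_iff.mp hz)
  have h2 := (hasFPS hc').hasFPowerSeriesAt
  exact FormalMultilinearSeries.ofScalars_series_injective ℂ ℂ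
    (h1.eq_formalMultilinearSeries h2)


abbrev Hs : Type := lp (fun _ : ℕ => ℂ) 2

def kM (I : Set ℕ) (n : ℕ) : ℕ := Nat.count (· ∈ I) n
def kC (I : Set ℕ) (n : ℕ) : ℕ := Nat.count (· ∉ I) n

/-- Taylor coefficients of the function attached to `x`. -/
def coefA (I : Set ℕ) (x : ℕ → ℂ) (n : ℕ) : ℂ :=
  if n ∈ I then x (2 * kM I n + 1) + (Real.sqrt (kM I n + 1) : ℂ) * x (2 * kM I n)
  else ((kC I n : ℂ) + 1) * x (2 * kC I n) - ((kC I n : ℂ) + 2) * x (2 * kC I n + 2)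

lemma coefA_add (I : Set ℕ) (x y : ℕ → ℂ) (n : ℕ) :
    coefA I (x + y) n = coefA I x n + coefA I y n := by
  unfold coefA
  split <;> simp <;> ring

lemma coefA_smul (I : Set ℕ) (c : ℂ) (x : ℕ → ℂ) (n : ℕ) :
    coefA I (c • x) n = c * coefA I x n := by
  unfold coefA
  split <;> simp <;> ring

lemma norm_coord_le (x : Hs) (i : ℕ) : ‖(x : ℕ → ℂ) i‖ ≤ ‖x‖ :=
  lp.norm_apply_le_norm (by norm_num) x i

lemma sqrt_le_succ (k : ℕ) : Real.sqrt ((k:ℝ) + 1) ≤ (k:ℝ) + 1 := by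
  have h := Real.sqrt_le_sqrt (show (k:ℝ)+1 ≤ ((k:ℝ)+1)^2 by nlinarith [Nat.cast_nonneg (α := ℝ) k])
  rwa [Real.sqrt_sq (by positivity)] at h

lemma coefA_bound (I : Set ℕ) (x : Hs) (n : ℕ) :
    ‖coefA I (x : ℕ → ℂ) n‖ ≤ (4 * ‖x‖) * ((n:ℝ) + 1) := by
  have hx : ∀ i, ‖(x : ℕ → ℂ) i‖ ≤ ‖x‖ := norm_coord_le x
  have hxnn : (0:ℝ) ≤ ‖x‖ := norm_nonneg x
  unfold coefA
  split
  case isTrue h =>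
    set k := kM I n with hk
    have hkn : (k : ℝ) ≤ (n : ℝ) := by exact_mod_cast Nat.count_le _
    calc ‖(x : ℕ → ℂ) (2*k+1) + (Real.sqrt (k+1) : ℂ) * (x : ℕ → ℂ) (2*k)‖
        ≤ ‖(x : ℕ → ℂ) (2*k+1)‖ + ‖(Real.sqrt (k+1) : ℂ)‖ * ‖(x : ℕ → ℂ) (2*k)‖ := by
          refine (norm_add_le _ _).trans ?_
          rw [norm_mul]
      _ ≤ ‖x‖ + ((k:ℝ)+1) * ‖x‖ := by
          have h1 : ‖(Real.sqrt (k+1) : ℂ)‖ = Real.sqrt ((k:ℝ)+1) := by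
            rw [Complex.norm_real, Real.norm_eq_abs, abs_of_nonneg (Real.sqrt_nonneg _)]
          rw [h1]
          refine add_le_add (hx _) ?_
          exact mul_le_mul (sqrt_le_succ k) (hx _) (norm_nonneg _) (by positivity)
      _ ≤ (4 * ‖x‖) * ((n:ℝ) + 1) := by nlinarith
  case isFalse h =>
    set k := kC I n with hk
    have hkn : (k : ℝ) ≤ (n : ℝ) := by exact_mod_cast Nat.count_le _
    have hc1 : ‖((k:ℂ)+1)‖ = (k:ℝ)+1 := by
      rw [show ((k:ℂ)+1) = ((k+1 : ℕ) : ℂ) by push_cast; ring, Complex.norm_natCast]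
      push_cast; ring
    have hc2 : ‖((k:ℂ)+2)‖ = (k:ℝ)+2 := by
      rw [show ((k:ℂ)+2) = ((k+2 : ℕ) : ℂ) by push_cast; ring, Complex.norm_natCast]
      push_cast; ring
    calc ‖((k:ℂ)+1) * (x : ℕ → ℂ) (2*k) - ((k:ℂ)+2) * (x : ℕ → ℂ) (2*k+2)‖
        ≤ ((k:ℝ)+1) * ‖x‖ + ((k:ℝ)+2) * ‖x‖ := by
          refine (norm_sub_le _ _).trans ?_
          rw [norm_mul, norm_mul, hc1, hc2]
          exact add_le_add (mul_le_mul_of_nonneg_left (hx _) (by positivity))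
            (mul_le_mul_of_nonneg_left (hx _) (by positivity))
      _ ≤ (4 * ‖x‖) * ((n:ℝ) + 1) := by nlinarith


lemma summable_coef (I : Set ℕ) (x : Hs) {z : ℂ} (hz : ‖z‖ < 1) :
    Summable (fun n : ℕ => coefA I (x : ℕ → ℂ) n * z ^ n) :=
  ((summable_cz (coefA_bound I x) hz)).of_norm

/-- The embedding of `Hs` into functions on `ℂ`. -/
def iota (I : Set ℕ) : Hs →ₗ[ℂ] (ℂ → ℂ) where
  toFun x := fun z => if ‖z‖ < 1 then F (coefA I (x : ℕ → ℂ)) z else 0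
  map_add' x y := by
    funext z
    by_cases hz : ‖z‖ < 1
    · simp only [Pi.add_apply, if_pos hz]
      unfold F
      rw [← Summable.tsum_add (summable_coef I x hz) (summable_coef I y hz)]
      refine tsum_congr fun n => ?_
      have hcoord : ((x + y : Hs) : ℕ → ℂ) = (x : ℕ → ℂ) + (y : ℕ → ℂ) := lp.coeFn_add x y
      rw [hcoord, coefA_add]
      ring
    · simp only [Pi.add_apply, if_neg hz, add_zero]
  map_smul' c x := by
    funext z
    by_cases hz : ‖z‖ < 1
    · simp only [if_pos hz, RingHom.id_apply, Pi.smul_apply, smul_eq_mul]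
      unfold F
      rw [← tsum_mul_left]
      refine tsum_congr fun n => ?_
      have hcoord : ((c • x : Hs) : ℕ → ℂ) = c • (x : ℕ → ℂ) := lp.coeFn_smul c x
      rw [hcoord, coefA_smul]
      ring
    · simp only [if_neg hz, RingHom.id_apply, Pi.smul_apply, smul_eq_mul, mul_zero]

lemma iota_apply (I : Set ℕ) (x : Hs) {z : ℂ} (hz : ‖z‖ < 1) :
    iota I x z = F (coefA I (x : ℕ → ℂ)) z := by
  simp only [iota, LinearMap.coe_mk, AddHom.coe_mk, if_pos hz]

lemma summable_sq (x : Hs) : Summable (fun n : ℕ => ‖(x : ℕ → ℂ) n‖ ^ 2) := by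
  have h := lp.memℓp x
  rw [memℓp_gen_iff (by norm_num : (0:ℝ) < (2:ℝ≥0∞).toReal)] at h
  refine h.congr fun n => ?_
  rw [show ((2:ℝ≥0∞)).toReal = ((2:ℕ):ℝ) by norm_num, Real.rpow_natCast]

/-- The key ℓ² forcing lemma: if the `Iᶜ`-coefficients all vanish and the `I`-coefficients
eventually vanish, then all even coordinates vanish. -/
lemma core (x : Hs)
    (hE : ∀ k : ℕ, ((k:ℂ)+1) * (x : ℕ → ℂ) (2*k) - ((k:ℂ)+2) * (x : ℕ → ℂ) (2*k+2) = 0)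
    (N : ℕ)
    (hO : ∀ k ≥ N, (x : ℕ → ℂ) (2*k+1) + (Real.sqrt (k+1) : ℂ) * (x : ℕ → ℂ) (2*k) = 0) :
    ∀ k, (x : ℕ → ℂ) (2*k) = 0 := by
  set u : ℕ → ℂ := (x : ℕ → ℂ) with hu
  have hgeom : ∀ k, u (2*k) = u 0 / ((k:ℂ)+1) := by
    intro k
    induction k with
    | zero => norm_num
    | succ k ih =>
      have h := hE k
      have hne : ((k:ℂ)+2) ≠ 0 := by
        have heq : ((k:ℂ)+2) = ((k+2:ℕ):ℂ) := by push_cast; ring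
        rw [heq]
        exact Nat.cast_ne_zero.mpr (by omega)
      have hne1 : ((k:ℂ)+1) ≠ 0 := by
        have heq : ((k:ℂ)+1) = ((k+1:ℕ):ℂ) := by push_cast; ring
        rw [heq]
        exact Nat.cast_ne_zero.mpr (by omega)
      have h2 : ((k:ℂ)+2) * u (2*k+2) = ((k:ℂ)+1) * u (2*k) := by linear_combination -h
      have h3 : u (2*(k+1)) = ((k:ℂ)+1) * u (2*k) / ((k:ℂ)+2) := by
        rw [show 2*(k+1) = 2*k+2 by ring, eq_div_iff hne]
        linear_combination h2
      rw [h3, ih]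
      have hne1' : ((k:ℂ)+1+1) ≠ 0 := by
        have heq : ((k:ℂ)+1+1) = ((k+2:ℕ):ℂ) := by push_cast; ring
        rw [heq]
        exact Nat.cast_ne_zero.mpr (by omega)
      push_cast
      field_simp
      try ring
      try exact Or.inl trivial
  -- it suffices to show u 0 = 0
  suffices h0 : u 0 = 0 by
    intro k
    rw [hgeom k, h0, zero_div]
  by_contra h0
  -- odd coordinates have norm ‖u 0‖/√(k+1) for k ≥ N
  have hodd : ∀ k ≥ N, ‖u (2*k+1)‖ ^ 2 = ‖u 0‖ ^ 2 / ((k:ℝ)+1) := by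
    intro k hk
    have h := hO k hk
    have h2 : u (2*k+1) = -((Real.sqrt (k+1) : ℂ) * u (2*k)) := by linear_combination h
    rw [h2, hgeom k]
    rw [norm_neg, norm_mul, norm_div]
    have hs : ‖(Real.sqrt (k+1) : ℂ)‖ = Real.sqrt ((k:ℝ)+1) := by
      rw [Complex.norm_real, Real.norm_eq_abs, abs_of_nonneg (Real.sqrt_nonneg _)]
    have hc : ‖((k:ℂ)+1)‖ = (k:ℝ)+1 := by
      rw [show ((k:ℂ)+1) = ((k+1 : ℕ) : ℂ) by push_cast; ring, Complex.norm_natCast]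
      push_cast; ring
    rw [hs, hc]
    rw [mul_pow, div_pow, Real.sq_sqrt (by positivity)]
    have hne : ((k:ℝ)+1) ≠ 0 := by positivity
    field_simp
  -- summability of the odd squares
  have hsum : Summable (fun k : ℕ => ‖u (2*k+1)‖ ^ 2) := by
    have h := summable_sq x
    exact h.comp_injective (fun a b hab => by omega)
  -- hence summability of 1/(k+1), contradiction
  have hsum2 : Summable (fun k : ℕ => ‖u 0‖ ^ 2 / ((k:ℝ)+(N:ℝ)+1)) := by
    have h := (summable_nat_add_iff N).mpr hsum
    refine h.congr fun k => ?_
    rw [hodd (k+N) (by omega)]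
    push_cast
    ring_nf
  have hsum3 : Summable (fun k : ℕ => 1 / ((k:ℝ)+(N:ℝ)+1)) := by
    have hne : ‖u 0‖ ^ 2 ≠ 0 := by
      simpa using h0
    have h := hsum2.mul_left (1 / ‖u 0‖ ^ 2)
    refine h.congr fun k => ?_
    have hkn : ((k:ℝ) + (N:ℝ) + 1) ≠ 0 := by positivity
    field_simp
  have hdiv : ¬ Summable (fun k : ℕ => 1 / ((k:ℝ)+(N:ℝ)+1)) := by
    intro hcon
    have h1 : Summable (fun k : ℕ => 1 / ((k:ℝ)+1)) := by
      have := (summable_nat_add_iff (f := fun k : ℕ => 1 / ((k:ℝ)+1)) N).mp ?_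
      · exact this
      · refine hcon.congr fun k => ?_
        push_cast
        ring_nf
    have h2 : Summable (fun k : ℕ => 1 / (k:ℝ)) := by
      have := (summable_nat_add_iff (f := fun k : ℕ => 1 / (k:ℝ)) 1).mp ?_
      · exact this
      · refine h1.congr fun k => ?_
        push_cast
        ring_nf
    exact Real.not_summable_one_div_natCast h2
  exact hdiv hsum3

/-- Element of `Hs` supported on a finite set. -/
def truncLp (x : ℕ → ℂ) (s : Finset ℕ) : Hs := ∑ i ∈ s, lp.single 2 i (x i)

lemma truncLp_apply (x : ℕ → ℂ) (s : Finset ℕ) (n : ℕ) :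
    (truncLp x s : ℕ → ℂ) n = if n ∈ s then x n else 0 := by
  simp only [truncLp, lp.coeFn_sum, Finset.sum_apply, lp.single_apply, Finset.sum_dite_eq,
    Finset.sum_dite_eq', Pi.single_apply, Finset.sum_ite_eq, Finset.sum_ite_eq']

lemma count_large {q : ℕ → Prop} [DecidablePred q] (hq : (setOf q).Infinite) (M n : ℕ)
    (hn : Nat.nth q M ≤ n) : M ≤ Nat.count q n := by
  calc M = Nat.count q (Nat.nth q M) := (Nat.count_nth_of_infinite hq M).symm
    _ ≤ Nat.count q n := Nat.count_monotone _ hn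

lemma setOf_mem_I (I : Set ℕ) : (setOf (· ∈ I)) = I := rfl
lemma setOf_not_mem_I (I : Set ℕ) : (setOf (· ∉ I)) = Iᶜ := rfl

lemma coefA_ev_zero (I : Set ℕ) (hI : I.Infinite) (hIc : Iᶜ.Infinite) (y : ℕ → ℂ) (M : ℕ)
    (hy : ∀ m, M ≤ m → y m = 0) (n : ℕ)
    (hn : max (Nat.nth (· ∈ I) M) (Nat.nth (· ∉ I) M) < n) : coefA I y n = 0 := by
  have hI' : (setOf (· ∈ I)).Infinite := by rw [setOf_mem_I]; exact hI
  have hIc' : (setOf (· ∉ I)).Infinite := by rw [setOf_not_mem_I]; exact hIc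
  unfold coefA
  split
  case isTrue h =>
    have hM : M ≤ kM I n := by
      unfold kM
      exact count_large hI' M n (le_of_lt (lt_of_le_of_lt (le_max_left _ _) hn))
    rw [hy _ (by omega), hy _ (by omega)]
    ring
  case isFalse h =>
    have hM : M ≤ kC I n := by
      unfold kC
      exact count_large hIc' M n (le_of_lt (lt_of_le_of_lt (le_max_right _ _) hn))
    rw [hy _ (by omega), hy _ (by omega)]
    ring

lemma exists_poly (I : Set ℕ) (hI : I.Infinite) (hIc : Iᶜ.Infinite) (y : Hs) (M : ℕ)
    (hy : ∀ m, M ≤ m → (y : ℕ → ℂ) m = 0) :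
    ∃ p : Polynomial ℂ, (∀ n, p.coeff n = coefA I (y : ℕ → ℂ) n) ∧
      ∀ z : ℂ, ‖z‖ < 1 → iota I y z = Polynomial.eval z p := by
  set n₀ : ℕ := max (Nat.nth (· ∈ I) M) (Nat.nth (· ∉ I) M) + 1 with hn₀
  have hzero : ∀ n, n₀ ≤ n → coefA I (y : ℕ → ℂ) n = 0 := fun n hn =>
    coefA_ev_zero I hI hIc _ M hy n (by omega)
  refine ⟨∑ n ∈ Finset.range n₀, Polynomial.C (coefA I (y : ℕ → ℂ) n) * Polynomial.X ^ n,
    ?_, ?_⟩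
  · intro n
    rw [Polynomial.finset_sum_coeff]
    simp only [Polynomial.coeff_C_mul, Polynomial.coeff_X_pow, mul_ite, mul_one, mul_zero]
    rw [Finset.sum_ite_eq (Finset.range n₀) n (fun i => coefA I (y : ℕ → ℂ) i)]
    split
    case isTrue h => rfl
    case isFalse h =>
      exact (hzero n (by simpa using h)).symm
  · intro z hz
    rw [iota_apply I y hz]
    unfold F
    rw [tsum_eq_sum (s := Finset.range n₀)
      (fun n hn => by rw [hzero n (by simpa using hn), zero_mul])]
    rw [Polynomial.eval_finset_sum]
    refine Finset.sum_congr rfl fun n _ => ?_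
    simp only [Polynomial.eval_mul, Polynomial.eval_C, Polynomial.eval_pow, Polynomial.eval_X]

lemma dense_poly (I : Set ℕ) (hI : I.Infinite) (hIc : Iᶜ.Infinite) :
    Dense {h : Hs | ∃ p : Polynomial ℂ, ∀ z ∈ ball (0:ℂ) 1,
      iota I h z = Polynomial.eval z p} := by
  rw [Metric.dense_iff]
  intro x r hr
  have hs := lp.hasSum_single (E := fun _ : ℕ => ℂ) (p := 2) (by norm_num) x
  have hev := Metric.tendsto_nhds.mp hs r hr
  obtain ⟨s, hsF⟩ := hev.exists
  set y : Hs := truncLp (x : ℕ → ℂ) s with hy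
  have hyx : dist x y < r := by
    rw [dist_comm]
    simpa [hy, truncLp] using hsF
  have hsupp : ∀ m, (s.sup (fun m => m)) + 1 ≤ m → (y : ℕ → ℂ) m = 0 := by
    intro m hm
    rw [hy, truncLp_apply]
    rw [if_neg]
    intro hmem
    have h3 : m ≤ s.sup (fun m : ℕ => m) := Finset.le_sup (f := fun m : ℕ => m) hmem
    omega
  obtain ⟨p, _, hp2⟩ := exists_poly I hI hIc y _ hsupp
  exact ⟨y, Metric.mem_ball'.mpr hyx, p, fun z hz => hp2 z (mem_ball_zero_iff.mp hz)⟩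

/-- Downward recursion solving `(k+1)*q k - (k+2)*q (k+1) = b k` with `q k = 0` for `k ≥ N`. -/
def solveQ (b : ℕ → ℂ) (N : ℕ) (k : ℕ) : ℂ :=
  if N ≤ k then 0
  else (b k + ((k:ℂ)+2) * solveQ b N (k+1)) / ((k:ℂ)+1)
termination_by N - k
decreasing_by omega

lemma solveQ_of_le (b : ℕ → ℂ) (N k : ℕ) (h : N ≤ k) : solveQ b N k = 0 := by
  rw [solveQ, if_pos h]

lemma solveQ_of_lt (b : ℕ → ℂ) (N k : ℕ) (h : k < N) :
    solveQ b N k = (b k + ((k:ℂ)+2) * solveQ b N (k+1)) / ((k:ℂ)+1) := by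
  rw [solveQ, if_neg (by omega)]

lemma cast_succ_ne (k : ℕ) : ((k:ℂ)+1) ≠ 0 := by
  have heq : ((k:ℂ)+1) = ((k+1:ℕ):ℂ) := by push_cast; ring
  rw [heq]
  exact Nat.cast_ne_zero.mpr (by omega)

lemma poly_in_range (I : Set ℕ) (hI : I.Infinite) (hIc : Iᶜ.Infinite) (p : Polynomial ℂ) :
    ∃ h : Hs, ∀ z : ℂ, ‖z‖ < 1 → iota I h z = Polynomial.eval z p := by
  classical
  have hI' : (setOf (· ∈ I)).Infinite := by rw [setOf_mem_I]; exact hI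
  have hIc' : (setOf (· ∉ I)).Infinite := by rw [setOf_not_mem_I]; exact hIc
  set N : ℕ := p.natDegree + 1 with hN
  set bj : ℕ → ℂ := fun k => p.coeff (Nat.nth (· ∉ I) k) with hbj
  set bi : ℕ → ℂ := fun k => p.coeff (Nat.nth (· ∈ I) k) with hbi
  set xf : ℕ → ℂ := fun m => if m % 2 = 0 then solveQ bj N (m/2)
      else bi (m/2) - (Real.sqrt (((m/2 : ℕ):ℝ)+1) : ℂ) * solveQ bj N (m/2) with hxf
  have xf_even : ∀ k, xf (2*k) = solveQ bj N k := by
    intro k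
    rw [hxf]
    simp only
    rw [if_pos (by omega), show (2*k)/2 = k by omega]
  have xf_odd : ∀ k, xf (2*k+1) =
      bi k - (Real.sqrt ((k:ℝ)+1) : ℂ) * solveQ bj N k := by
    intro k
    rw [hxf]
    simp only
    rw [if_neg (by omega), show (2*k+1)/2 = k by omega]
  have hsupp : ∀ m, 2*N ≤ m → xf m = 0 := by
    intro m hm
    have hm2 : N ≤ m / 2 := by omega
    have hbi0 : bi (m/2) = 0 := by
      rw [hbi]
      refine Polynomial.coeff_eq_zero_of_natDegree_lt ?_
      have h1 : m/2 ≤ Nat.nth (· ∈ I) (m/2) := (Nat.nth_strictMono hI').le_apply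
      omega
    rw [hxf]
    simp only
    rw [solveQ_of_le _ _ _ hm2]
    split
    · rfl
    · rw [hbi0]; ring
  set X : Hs := truncLp xf (Finset.range (2*N+2)) with hXdef
  have hX : ∀ m, (X : ℕ → ℂ) m = xf m := by
    intro m
    rw [hXdef, truncLp_apply]
    split
    case isTrue h => rfl
    case isFalse h =>
      rw [hsupp m (by simp at h; omega)]
  have hcoef : ∀ n, coefA I (X : ℕ → ℂ) n = p.coeff n := by
    intro n
    unfold coefA
    split
    case isTrue h =>
      have hnth : Nat.nth (· ∈ I) (kM I n) = n := Nat.nth_count (p := (· ∈ I)) h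
      have hb : bi (kM I n) = p.coeff n := by simp only [hbi]; rw [hnth]
      rw [hX, hX, xf_odd, xf_even]
      linear_combination hb
    case isFalse h =>
      rw [hX, hX, show 2 * kC I n + 2 = 2 * (kC I n + 1) by ring, xf_even, xf_even]
      have hnth : Nat.nth (· ∉ I) (kC I n) = n := Nat.nth_count (p := (· ∉ I)) h
      have hb : bj (kC I n) = p.coeff n := by simp only [hbj]; rw [hnth]
      by_cases hk : kC I n < N
      · rw [solveQ_of_lt _ _ _ hk]
        have hne := cast_succ_ne (kC I n)
        field_simp
        linear_combination hb
      · have hk' : N ≤ kC I n := le_of_not_gt hk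
        rw [solveQ_of_le _ _ _ hk', solveQ_of_le _ _ _ (by omega)]
        have hcn : kC I n ≤ n := Nat.count_le _
        rw [Polynomial.coeff_eq_zero_of_natDegree_lt (by omega)]
        ring
  refine ⟨X, fun z hz => ?_⟩
  rw [iota_apply I X hz]
  unfold F
  have hzero : ∀ n ∉ Finset.range (p.natDegree + 1), coefA I (X : ℕ → ℂ) n * z ^ n = 0 := by
    intro n hn
    simp only [Finset.mem_range] at hn
    rw [hcoef n, Polynomial.coeff_eq_zero_of_natDegree_lt (by omega), zero_mul]
  rw [tsum_eq_sum (s := Finset.range (p.natDegree + 1)) hzero]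
  rw [Polynomial.eval_eq_sum_range]
  refine Finset.sum_congr rfl fun n _ => ?_
  rw [hcoef n]

/-- The witness function: coordinates `1/(k+1)` at even indices `2k`. -/
def ffun : ℕ → ℂ := fun m => if m % 2 = 0 then (1:ℂ)/(((m/2 : ℕ):ℂ)+1) else 0

lemma ffun_even (k : ℕ) : ffun (2*k) = 1/((k:ℂ)+1) := by
  unfold ffun
  rw [if_pos (by omega), show (2*k)/2 = k by omega]

lemma ffun_odd (k : ℕ) : ffun (2*k+1) = 0 := by
  unfold ffun
  rw [if_neg (by omega)]

lemma ffun_mem : Memℓp ffun 2 := by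
  apply memℓp_gen
  have hs : Summable (fun m : ℕ => 4 / ((m:ℝ)+1)^2) := by
    have h1 : Summable (fun n : ℕ => 1 / ((n:ℝ))^(2:ℕ)) := by
      rw [Real.summable_one_div_nat_pow]
      norm_num
    have h2 := (summable_nat_add_iff 1).mpr h1
    have h3 := h2.mul_left 4
    refine h3.congr fun m => ?_
    push_cast
    ring
  refine Summable.of_nonneg_of_le (fun m => ?_) (fun m => ?_) hs
  · positivity
  · have htr : ((2:ℝ≥0∞)).toReal = ((2:ℕ):ℝ) := by norm_num
    rw [htr, Real.rpow_natCast]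
    unfold ffun
    split
    case isTrue h =>
      have ha : (0:ℝ) < ((m/2 : ℕ):ℝ) + 1 := by positivity
      have hb : (0:ℝ) < (m:ℝ) + 1 := by positivity
      have hba : (m:ℝ) + 1 ≤ 2*(((m/2 : ℕ):ℝ)+1) := by
        have hnat : m + 1 ≤ 2*(m/2) + 2 := by omega
        exact_mod_cast hnat
      have hnorm : ‖(1:ℂ)/(((m/2 : ℕ):ℂ)+1)‖ = 1/(((m/2 : ℕ):ℝ)+1) := by
        rw [norm_div, norm_one]
        congr 1
        rw [show (((m/2 : ℕ):ℂ)+1) = (((m/2+1 : ℕ)):ℂ) by push_cast; ring,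
          Complex.norm_natCast]
        push_cast
        ring
      rw [hnorm]
      rw [div_pow, one_pow, div_le_div_iff₀ (by positivity) (by positivity)]
      nlinarith
    case isFalse h =>
      rw [norm_zero]
      have : (0:ℝ)^(2:ℕ) = 0 := by norm_num
      rw [this]
      positivity

def fWit : Hs := ⟨ffun, ffun_mem⟩

lemma fWit_coe : (fWit : ℕ → ℂ) = ffun := rfl

lemma coefA_f_notI (I : Set ℕ) {n : ℕ} (hn : n ∉ I) : coefA I ffun n = 0 := by
  unfold coefA
  rw [if_neg hn]
  rw [show 2 * kC I n + 2 = 2 * (kC I n + 1) by ring, ffun_even, ffun_even]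
  have h1 := cast_succ_ne (kC I n)
  have h2 : ((kC I n : ℂ)+1+1) ≠ 0 := by
    have heq : ((kC I n:ℂ)+1+1) = ((kC I n+2:ℕ):ℂ) := by push_cast; ring
    rw [heq]
    exact Nat.cast_ne_zero.mpr (by omega)
  push_cast
  field_simp
  ring

lemma not_in_closure (I : Set ℕ) (hI : I.Infinite) (hIc : Iᶜ.Infinite) :
    fWit ∉ closure {h : Hs | ∃ p : Polynomial ℂ, (∀ n, n ∉ I → p.coeff n = 0) ∧
      ∀ z ∈ ball (0:ℂ) 1, iota I h z = Polynomial.eval z p} := by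
  have hI' : (setOf (· ∈ I)).Infinite := by rw [setOf_mem_I]; exact hI
  have hIc' : (setOf (· ∉ I)).Infinite := by rw [setOf_not_mem_I]; exact hIc
  intro hcl
  rw [Metric.mem_closure_iff] at hcl
  obtain ⟨y, hyS, hdist⟩ := hcl 1 one_pos
  obtain ⟨p, hp0, hpe⟩ := hyS
  -- the Taylor coefficients of `y` are the coefficients of `p`
  have hCp : ∀ n, ‖p.coeff n‖ ≤ (∑ i ∈ Finset.range (p.natDegree+1), ‖p.coeff i‖) * ((n:ℝ)+1) := by
    intro n
    set Cp := ∑ i ∈ Finset.range (p.natDegree+1), ‖p.coeff i‖ with hCpd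
    have hCp0 : 0 ≤ Cp := Finset.sum_nonneg fun i _ => norm_nonneg _
    have hb : ‖p.coeff n‖ ≤ Cp := by
      by_cases hn : n < p.natDegree + 1
      · exact Finset.single_le_sum (f := fun i => ‖p.coeff i‖)
          (fun i _ => norm_nonneg _) (Finset.mem_range.mpr hn)
      · rw [Polynomial.coeff_eq_zero_of_natDegree_lt (by omega)]
        simpa using hCp0
    have h1 : (1:ℝ) ≤ (n:ℝ)+1 := by
      have := Nat.cast_nonneg (α := ℝ) n
      linarith
    calc ‖p.coeff n‖ ≤ Cp := hb
      _ = Cp * 1 := by ring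
      _ ≤ Cp * ((n:ℝ)+1) := by nlinarith
  have hFp : ∀ z : ℂ, ‖z‖ < 1 → Polynomial.eval z p = F p.coeff z := by
    intro z _
    unfold F
    rw [tsum_eq_sum (s := Finset.range (p.natDegree+1))
      (fun n hn => by
        rw [Polynomial.coeff_eq_zero_of_natDegree_lt (by simpa using hn), zero_mul])]
    rw [Polynomial.eval_eq_sum_range]
  have hcoefy : coefA I (y : ℕ → ℂ) = p.coeff := by
    apply coeff_unique (coefA_bound I y) hCp
    intro z hz
    rw [← iota_apply I y hz, hpe z (mem_ball_zero_iff.mpr hz), hFp z hz]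
  have hE : ∀ k : ℕ, ((k:ℂ)+1) * (y : ℕ → ℂ) (2*k) - ((k:ℂ)+2) * (y : ℕ → ℂ) (2*k+2) = 0 := by
    intro k
    have hn : (Nat.nth (· ∉ I) k) ∉ I := Nat.nth_mem_of_infinite hIc' k
    have h := congrFun hcoefy (Nat.nth (· ∉ I) k)
    unfold coefA at h
    rw [if_neg hn] at h
    have hk : kC I (Nat.nth (· ∉ I) k) = k := by
      unfold kC
      exact Nat.count_nth_of_infinite hIc' k
    rw [hk] at h
    rw [hp0 _ hn] at h
    exact h
  have hO : ∀ k ≥ p.natDegree + 1,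
      (y : ℕ → ℂ) (2*k+1) + (Real.sqrt ((k:ℝ)+1) : ℂ) * (y : ℕ → ℂ) (2*k) = 0 := by
    intro k hk
    have hn : (Nat.nth (· ∈ I) k) ∈ I := Nat.nth_mem_of_infinite hI' k
    have h := congrFun hcoefy (Nat.nth (· ∈ I) k)
    unfold coefA at h
    rw [if_pos hn] at h
    have hkk : kM I (Nat.nth (· ∈ I) k) = k := by
      unfold kM
      exact Nat.count_nth_of_infinite hI' k
    rw [hkk] at h
    have hdeg : p.coeff (Nat.nth (· ∈ I) k) = 0 := by
      refine Polynomial.coeff_eq_zero_of_natDegree_lt ?_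
      have h1 : k ≤ Nat.nth (· ∈ I) k := (Nat.nth_strictMono hI').le_apply
      omega
    rw [hdeg] at h
    exact h
  have hzero := core y hE (p.natDegree+1) hO
  have h0 : (y : ℕ → ℂ) 0 = 0 := by
    have := hzero 0
    simpa using this
  have hf0 : (fWit : ℕ → ℂ) 0 = 1 := by
    rw [fWit_coe]
    have := ffun_even 0
    simpa using this
  have hle : (1:ℝ) ≤ dist fWit y := by
    rw [dist_eq_norm]
    have hcoord : ‖((fWit - y : Hs) : ℕ → ℂ) 0‖ = 1 := by
      rw [lp.coeFn_sub, Pi.sub_apply, h0, hf0]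
      simp
    calc (1:ℝ) = ‖((fWit - y : Hs) : ℕ → ℂ) 0‖ := hcoord.symm
      _ ≤ ‖fWit - y‖ := norm_coord_le _ 0
  linarith

lemma coefA_sub (I : Set ℕ) (x y : ℕ → ℂ) (n : ℕ) :
    coefA I (x - y) n = coefA I x n - coefA I y n := by
  unfold coefA
  split <;> simp <;> ring

lemma coef_zero_imp_zero (I : Set ℕ) (hI : I.Infinite) (hIc : Iᶜ.Infinite) (d : Hs)
    (hz : ∀ n, coefA I (d : ℕ → ℂ) n = 0) : d = 0 := by
  have hI' : (setOf (· ∈ I)).Infinite := by rw [setOf_mem_I]; exact hI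
  have hIc' : (setOf (· ∉ I)).Infinite := by rw [setOf_not_mem_I]; exact hIc
  have hE : ∀ k : ℕ, ((k:ℂ)+1) * (d : ℕ → ℂ) (2*k) - ((k:ℂ)+2) * (d : ℕ → ℂ) (2*k+2) = 0 := by
    intro k
    have hn : (Nat.nth (· ∉ I) k) ∉ I := Nat.nth_mem_of_infinite hIc' k
    have h := hz (Nat.nth (· ∉ I) k)
    unfold coefA at h
    rw [if_neg hn] at h
    have hk : kC I (Nat.nth (· ∉ I) k) = k := by
      unfold kC
      exact Nat.count_nth_of_infinite hIc' k
    rwa [hk] at h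
  have hO : ∀ k, k ≥ 0 → (d : ℕ → ℂ) (2*k+1) +
      (Real.sqrt ((k:ℝ)+1) : ℂ) * (d : ℕ → ℂ) (2*k) = 0 := by
    intro k _
    have hn : (Nat.nth (· ∈ I) k) ∈ I := Nat.nth_mem_of_infinite hI' k
    have h := hz (Nat.nth (· ∈ I) k)
    unfold coefA at h
    rw [if_pos hn] at h
    have hk : kM I (Nat.nth (· ∈ I) k) = k := by
      unfold kM
      exact Nat.count_nth_of_infinite hI' k
    rwa [hk] at h
  have heven := core d hE 0 hO
  have hodd : ∀ k, (d : ℕ → ℂ) (2*k+1) = 0 := by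
    intro k
    have h := hO k (Nat.zero_le k)
    rw [heven k] at h
    simpa using h
  apply lp.ext
  funext m
  show (d : ℕ → ℂ) m = 0
  rcases Nat.even_or_odd m with ⟨k, hk⟩ | ⟨k, hk⟩
  · have h := heven k
    rw [show 2*k = k + k by ring] at h
    rwa [hk]
  · have h := hodd k
    rwa [hk]

end Stmt17

open Stmt17 in
/-- For any `I ⊆ ℤ⁺` with `I` and its complement infinite, there is a Hilbert holomorphic
function space on the unit disk in which the polynomials are dense, but the polynomials with
Taylor support in `I` are not dense in the functions of `H` with Taylor support in `I`. -/
theorem stmt17 (I : Set ℕ) (hI : I.Infinite) (hIc : Iᶜ.Infinite) :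
    ∃ (H : Type) (_ : NormedAddCommGroup H) (_ : InnerProductSpace ℂ H) (_ : CompleteSpace H)
      (ι : H →ₗ[ℂ] (ℂ → ℂ)),
      (∀ h : H, DifferentiableOn ℂ (ι h) (ball (0 : ℂ) 1)) ∧
      (∀ h₁ h₂ : H, (∀ z ∈ ball (0 : ℂ) 1, ι h₁ z = ι h₂ z) → h₁ = h₂) ∧
      (∀ K : Set ℂ, IsCompact K → K ⊆ ball (0 : ℂ) 1 →
        ∃ C : ℝ, ∀ h : H, ∀ z ∈ K, ‖ι h z‖ ≤ C * ‖h‖) ∧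
      (∀ p : Polynomial ℂ, ∃ h : H, ∀ z ∈ ball (0 : ℂ) 1, ι h z = p.eval z) ∧
      Dense {h : H | ∃ p : Polynomial ℂ, ∀ z ∈ ball (0 : ℂ) 1, ι h z = p.eval z} ∧
      -- a function with Taylor support in `I` not approximable by polynomials supported in `I`
      ∃ (f : H) (a : ℕ → ℂ),
        (∀ z ∈ ball (0 : ℂ) 1, HasSum (fun n => a n * z ^ n) (ι f z)) ∧
        (∀ n, n ∉ I → a n = 0) ∧
        f ∉ closure {h : H | ∃ p : Polynomial ℂ,
          (∀ n, n ∉ I → p.coeff n = 0) ∧ ∀ z ∈ ball (0 : ℂ) 1, ι h z = p.eval z} := by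
  refine ⟨Hs, inferInstance, inferInstance, inferInstance, iota I, ?_, ?_, ?_, ?_, ?_, ?_⟩
  · -- differentiability
    intro h
    refine (diffOn_F (coefA_bound I h)).congr ?_
    intro z hz
    exact iota_apply I h (mem_ball_zero_iff.mp hz)
  · -- injectivity
    intro h₁ h₂ hagree
    have hc : coefA I (h₁ : ℕ → ℂ) = coefA I (h₂ : ℕ → ℂ) := by
      apply coeff_unique (coefA_bound I h₁) (coefA_bound I h₂)
      intro z hz
      rw [← iota_apply I h₁ hz, ← iota_apply I h₂ hz]
      exact hagree z (mem_ball_zero_iff.mpr hz)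
    have hd : ∀ n, coefA I ((h₁ - h₂ : Hs) : ℕ → ℂ) n = 0 := by
      intro n
      rw [lp.coeFn_sub, coefA_sub, congrFun hc n, sub_self]
    have hzero := coef_zero_imp_zero I hI hIc _ hd
    have := sub_eq_zero.mp hzero
    exact this
  · -- uniform bound on compacts
    intro K hK hKb
    by_cases hne : K.Nonempty
    · obtain ⟨z₀, hz₀K, hmax⟩ := hK.exists_isMaxOn hne continuous_norm.continuousOn
      have hr1 : ‖z₀‖ < 1 := mem_ball_zero_iff.mp (hKb hz₀K)
      refine ⟨∑' n : ℕ, 4 * ((n:ℝ)+1) * ‖z₀‖ ^ n, ?_⟩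
      intro h z hz
      have hzr : ‖z‖ ≤ ‖z₀‖ := hmax hz
      have hzlt : ‖z‖ < 1 := lt_of_le_of_lt hzr hr1
      rw [iota_apply I h hzlt]
      have hb := norm_F_le (coefA_bound I h) hr1 hzr
      refine hb.trans (le_of_eq ?_)
      rw [← tsum_mul_right]
      refine tsum_congr fun n => ?_
      ring
    · refine ⟨0, fun h z hz => absurd ⟨z, hz⟩ hne⟩
  · -- all polynomials are in the range
    intro p
    obtain ⟨h, hh⟩ := poly_in_range I hI hIc p
    exact ⟨h, fun z hz => hh z (mem_ball_zero_iff.mp hz)⟩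
  · -- density of polynomials
    exact dense_poly I hI hIc
  · -- the witness
    refine ⟨fWit, coefA I ffun, ?_, ?_, ?_⟩
    · intro z hz
      have hz' := mem_ball_zero_iff.mp hz
      rw [iota_apply I _ hz']
      exact hasSum_F (coefA_bound I fWit) hz'
    · exact fun n hn => coefA_f_notI I hn
    · exact not_in_closure I hI hIc
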